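/- For every r ∈ EuclideanSpace ℝ (Fin n), the expected squared norm after one random Kaczmarz step satisfies the exact identity ∑_{j=1}^{n} (‖c_j‖²/‖C‖_F²)·‖T_j r‖² = ‖r‖² − ‖C.mulVec r‖²/‖C‖_F². -/

import Mathlib

open scoped RealInnerProductSpace

/-- The `j`-th row of `C` as a vector in Euclidean space. -/
noncomputable def row {n : ℕ} (C : Matrix (Fin n) (Fin n) ℝ) (j : Fin n) :
    EuclideanSpace ℝ (Fin n) := (WithLp.equiv 2 (Fin n → ℝ)).symm (C j)

/-- Matrix-vector multiplication, landing in Euclidean space. -/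
noncomputable def mulVecE {n : ℕ} (C : Matrix (Fin n) (Fin n) ℝ)
    (v : EuclideanSpace ℝ (Fin n)) : EuclideanSpace ℝ (Fin n) :=
  (WithLp.equiv 2 (Fin n → ℝ)).symm (C.mulVec ((WithLp.equiv 2 (Fin n → ℝ)) v))

/-- Squared Frobenius norm. -/
noncomputable def frobSq {n : ℕ} (C : Matrix (Fin n) (Fin n) ℝ) : ℝ :=
  ∑ i, ∑ j, (C i j) ^ 2

open scoped Classical in
/-- Kaczmarz update for row `j`. -/
noncomputable def kacz {n : ℕ} (C : Matrix (Fin n) (Fin n) ℝ) (j : Fin n)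
    (y : EuclideanSpace ℝ (Fin n)) : EuclideanSpace ℝ (Fin n) :=
  if row C j = 0 then y
  else y - ((⟪y, row C j⟫) / ‖row C j‖ ^ 2) • row C j

/-- Kaczmarz iteration along an index sequence `j : Fin k → Fin n`,
applying `T_{j 0}` first and `T_{j (k-1)}` last. -/
noncomputable def kaczIter {n : ℕ} (C : Matrix (Fin n) (Fin n) ℝ) :
    (k : ℕ) → (Fin k → Fin n) → EuclideanSpace ℝ (Fin n) → EuclideanSpace ℝ (Fin n)
  | 0, _, y => y
  | (k + 1), j, y => kacz C (j (Fin.last k)) (kaczIter C k (fun i => j i.castSucc) y)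


/-- Exact identity for the expected squared norm after one
random Kaczmarz step. -/
theorem kacz_expected_sq_norm_identity {n : ℕ} (hn : 0 < n)
    (C : Matrix (Fin n) (Fin n) ℝ) (hC : C ≠ 0)
    (r : EuclideanSpace ℝ (Fin n)) :
    ∑ j, (‖row C j‖ ^ 2 / frobSq C) * ‖kacz C j r‖ ^ 2
      = ‖r‖ ^ 2 - ‖mulVecE C r‖ ^ 2 / frobSq C := by
  classical
  have hF : 0 < frobSq C := by
    have h0 : 0 ≤ frobSq C :=
      Finset.sum_nonneg fun i _ => Finset.sum_nonneg fun j _ => sq_nonneg _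
    rcases h0.lt_or_eq with h | h
    · exact h
    · exfalso; apply hC
      ext i j
      have h1 := (Finset.sum_eq_zero_iff_of_nonneg
        (fun i _ => Finset.sum_nonneg fun j _ => sq_nonneg (C i j))).mp h.symm i (Finset.mem_univ i)
      have h2 := (Finset.sum_eq_zero_iff_of_nonneg
        (fun j _ => sq_nonneg (C i j))).mp h1 j (Finset.mem_univ j)
      have := (pow_eq_zero_iff two_ne_zero).mp h2
      simpa using this
  have hFne : frobSq C ≠ 0 := ne_of_gt hF
  have hnorm : ∀ j, ‖row C j‖ ^ 2 = ∑ i, (C j i) ^ 2 := by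
    intro j
    rw [EuclideanSpace.norm_eq, Real.sq_sqrt (Finset.sum_nonneg fun i _ => sq_nonneg _)]
    simp [row, sq_abs]
  have hinner : ∀ j, ⟪r, row C j⟫ = ∑ i, C j i * r i := by
    intro j
    simp [row, PiLp.inner_apply, RCLike.inner_apply, mul_comm]
  have hkacz : ∀ j, (‖row C j‖ ^ 2 / frobSq C) * ‖kacz C j r‖ ^ 2
      = ‖row C j‖ ^ 2 * ‖r‖ ^ 2 / frobSq C - ⟪r, row C j⟫ ^ 2 / frobSq C := by
    intro j
    by_cases h : row C j = 0
    · simp [kacz, h]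
    · have hc : ‖row C j‖ ≠ 0 := norm_ne_zero_iff.mpr h
      have hc2 : ‖row C j‖ ^ 2 ≠ 0 := pow_ne_zero _ hc
      rw [kacz, if_neg h, norm_sub_sq_real, inner_smul_right, norm_smul, mul_pow,
        Real.norm_eq_abs, sq_abs]
      field_simp
      ring
  have hmul : ‖mulVecE C r‖ ^ 2 = ∑ j, (∑ i, C j i * r i) ^ 2 := by
    rw [EuclideanSpace.norm_eq, Real.sq_sqrt (Finset.sum_nonneg fun i _ => sq_nonneg _)]
    simp [mulVecE, Matrix.mulVec, dotProduct, sq_abs]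
  have hsum : ∑ j, ‖row C j‖ ^ 2 = frobSq C := by
    simp [hnorm, frobSq]
  calc ∑ j, (‖row C j‖ ^ 2 / frobSq C) * ‖kacz C j r‖ ^ 2
      = ∑ j, (‖row C j‖ ^ 2 * ‖r‖ ^ 2 / frobSq C - ⟪r, row C j⟫ ^ 2 / frobSq C) := by
        exact Finset.sum_congr rfl fun j _ => hkacz j
    _ = (∑ j, ‖row C j‖ ^ 2) * ‖r‖ ^ 2 / frobSq C - (∑ j, ⟪r, row C j⟫ ^ 2) / frobSq C := by
        rw [Finset.sum_sub_distrib, ← Finset.sum_div, ← Finset.sum_div, Finset.sum_mul]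
    _ = ‖r‖ ^ 2 - ‖mulVecE C r‖ ^ 2 / frobSq C := by
        rw [hsum, hmul, mul_div_cancel_left₀ _ hFne]
        simp only [hinner]
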